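/- Let U and Y be random variables on a probability space with U > 0 almost surely and Y > 0 almost surely, let β > 0, and let s_Y ∈ (0,∞) be such that M_Y(s) = E[e^{sY}] < ∞ for all s < s_Y and M_Y(s) → ∞ as s → s_Y from the left. Then for every r < 0 there exist α₁ ∈ (−s_Y, 0) and α₂ ∈ (0,∞) with α₁ ≠ α₂ such that α₁β + M_U(r)·M_Y(−α₁) − 1 = 0 and α₂β + M_U(r)·M_Y(−α₂) − 1 = 0, where M_U(r) = E[e^{rU}]. In particular, the equation αβ + M_U(r)M_Y(−α) − 1 = 0 has two distinct real solutions. -/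

import Mathlib

open MeasureTheory ProbabilityTheory Real

lemma mgf_continuousAt_aux
    {Ω : Type*} [MeasurableSpace Ω] (P : Measure Ω) [IsProbabilityMeasure P]
    (Y : Ω → ℝ) (hYmeas : Measurable Y) (hYpos : ∀ᵐ ω ∂P, 0 < Y ω)
    {sY t0 : ℝ}
    (hYfin : ∀ s < sY, Integrable (fun ω => Real.exp (s * Y ω)) P)
    (ht0 : t0 < sY) : ContinuousAt (fun s => mgf Y P s) t0 := by
  set b := (t0 + sY) / 2 with hb
  have hb1 : t0 < b := by simp only [hb]; linarith
  have hb2 : b < sY := by simp only [hb]; linarith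
  have key : ContinuousAt (fun s => ∫ ω, Real.exp (s * Y ω) ∂P) t0 := by
    apply continuousAt_of_dominated (bound := fun ω => Real.exp (b * Y ω))
    · exact Filter.Eventually.of_forall fun s =>
        (Real.measurable_exp.comp (measurable_const.mul hYmeas)).aestronglyMeasurable
    · filter_upwards [eventually_le_nhds hb1] with s hs
      filter_upwards [hYpos] with ω hω
      rw [Real.norm_eq_abs, abs_of_pos (Real.exp_pos _)]
      exact Real.exp_le_exp.mpr (mul_le_mul_of_nonneg_right hs hω.le)
    · exact hYfin b hb2
    · exact Filter.Eventually.of_forall fun ω =>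
        ((Real.continuous_exp.comp (continuous_mul_right _)).continuousAt)
  simpa [mgf] using key

/-- For `r < 0` the equation `αβ + M_U(r) M_Y(−α) − 1 = 0` has two distinct real
solutions, one in `(−s_Y, 0)` and one in `(0, ∞)`. -/
theorem lundberg_equation_two_roots_neg_r
    {Ω : Type*} [MeasurableSpace Ω] (P : Measure Ω) [IsProbabilityMeasure P]
    (U Y : Ω → ℝ) (hUmeas : Measurable U) (hYmeas : Measurable Y)
    (hUpos : ∀ᵐ ω ∂P, 0 < U ω) (hYpos : ∀ᵐ ω ∂P, 0 < Y ω)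
    (β : ℝ) (hβ : 0 < β)
    (sY : ℝ) (hsY : 0 < sY)
    (hYfin : ∀ s < sY, Integrable (fun ω => Real.exp (s * Y ω)) P)
    (hYblow : Filter.Tendsto (fun s => mgf Y P s)
      (nhdsWithin sY (Set.Iio sY)) Filter.atTop) :
    ∀ r < (0 : ℝ), ∃ α₁ ∈ Set.Ioo (-sY) (0 : ℝ), ∃ α₂ ∈ Set.Ioi (0 : ℝ),
      α₁ ≠ α₂ ∧
      α₁ * β + mgf U P r * mgf Y P (-α₁) - 1 = 0 ∧
      α₂ * β + mgf U P r * mgf Y P (-α₂) - 1 = 0 := by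
  intro r hr
  -- integrability of exp(r U)
  have hUint : Integrable (fun ω => Real.exp (r * U ω)) P := by
    refine Integrable.mono' (integrable_const 1)
      ((Real.measurable_exp.comp (measurable_const.mul hUmeas)).aestronglyMeasurable) ?_
    filter_upwards [hUpos] with ω hω
    rw [Real.norm_eq_abs, abs_of_pos (Real.exp_pos _)]
    exact Real.exp_le_one_iff.mpr (mul_nonpos_of_nonpos_of_nonneg hr.le hω.le)
  set m := mgf U P r with hm
  have hm0 : 0 < m := mgf_pos hUint
  -- m < 1
  have hm1 : m < 1 := by
    have hg : ∀ᵐ ω ∂P, 0 < 1 - Real.exp (r * U ω) := by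
      filter_upwards [hUpos] with ω hω
      have : Real.exp (r * U ω) < 1 :=
        Real.exp_lt_one_iff.mpr (mul_neg_of_neg_of_pos hr hω)
      linarith
    have hgint : Integrable (fun ω => 1 - Real.exp (r * U ω)) P :=
      (integrable_const 1).sub hUint
    have hpos : 0 < ∫ ω, (1 - Real.exp (r * U ω)) ∂P := by
      rw [integral_pos_iff_support_of_nonneg_ae (hg.mono fun ω hω => hω.le) hgint]
      have hcompl : P (Function.support fun ω => 1 - Real.exp (r * U ω))ᶜ = 0 := by
        refine measure_mono_null ?_ (ae_iff.mp hg)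
        intro ω hω
        simp only [Set.mem_compl_iff, Function.mem_support, not_not] at hω
        intro h
        rw [hω] at h
        exact lt_irrefl 0 h
      by_contra h
      push_neg at h
      have h0 : P (Function.support fun ω => 1 - Real.exp (r * U ω)) = 0 := le_antisymm h zero_le
      have := measure_univ (μ := P)
      have hle : P Set.univ ≤ 0 := by
        calc P Set.univ ≤ P (Function.support fun ω => 1 - Real.exp (r * U ω))
            + P (Function.support fun ω => 1 - Real.exp (r * U ω))ᶜ := by
              rw [← Set.union_compl_self (Function.support fun ω => 1 - Real.exp (r * U ω))] at *
              exact measure_union_le _ _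
          _ = 0 := by rw [h0, hcompl, add_zero]
      simp [this] at hle
    have : ∫ ω, (1 - Real.exp (r * U ω)) ∂P = 1 - m := by
      rw [integral_sub (integrable_const 1) hUint]
      simp [hm, mgf]
    linarith [this ▸ hpos]
  -- the function f
  set f : ℝ → ℝ := fun α => α * β + m * mgf Y P (-α) - 1 with hf
  have hf0 : f 0 < 0 := by simp [hf, mgf_zero]; linarith
  -- continuity of f on sets with -α < sY
  have hfcont : ∀ α : ℝ, -α < sY → ContinuousAt f α := by
    intro α hα
    have h1 : ContinuousAt (fun a : ℝ => mgf Y P (-a)) α :=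
      (mgf_continuousAt_aux P Y hYmeas hYpos hYfin hα).comp (continuous_neg.continuousAt)
    exact (((continuousAt_id.mul continuousAt_const).add
      (continuousAt_const.mul h1)).sub continuousAt_const)
  -- positive root
  have hA : f (2 / β) > 0 := by
    have h1 : (2 / β) * β = 2 := div_mul_cancel₀ 2 hβ.ne'
    have h2 : 0 ≤ m * mgf Y P (-(2 / β)) := mul_nonneg hm0.le mgf_nonneg
    simp only [hf]; linarith
  have hApos : (0 : ℝ) < 2 / β := by positivity
  have hivt2 : ∃ α₂ ∈ Set.Ioo (0 : ℝ) (2 / β), f α₂ = 0 := by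
    have hcont : ContinuousOn f (Set.Icc 0 (2 / β)) := by
      intro x hx
      exact (hfcont x (by have := hx.1; linarith)).continuousWithinAt
    have := intermediate_value_Ioo hApos.le hcont (a := 0) (b := 2 / β)
    have h0mem : (0 : ℝ) ∈ Set.Ioo (f 0) (f (2 / β)) := ⟨hf0, hA⟩
    obtain ⟨x, hx, hfx⟩ := this h0mem
    exact ⟨x, hx, hfx⟩
  -- negative root: find s ∈ (0, sY) with mgf Y P s large
  obtain ⟨s, hsbig, hs0, hssY⟩ :
      ∃ s, (2 + sY * β) / m ≤ mgf Y P s ∧ 0 < s ∧ s < sY := by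
    have h1 : ∀ᶠ s in nhdsWithin sY (Set.Iio sY), (2 + sY * β) / m ≤ mgf Y P s :=
      hYblow.eventually (Filter.eventually_ge_atTop _)
    have h2 : ∀ᶠ s in nhdsWithin sY (Set.Iio sY), 0 < s :=
      eventually_nhdsWithin_of_eventually_nhds (eventually_gt_nhds hsY)
    have h3 : ∀ᶠ s in nhdsWithin sY (Set.Iio sY), s < sY :=
      eventually_mem_nhdsWithin.mono (fun x hx => hx)
    obtain ⟨s, hs1, hs2, hs3⟩ := (h1.and (h2.and h3)).exists
    exact ⟨s, hs1, hs2, hs3⟩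
  have hBval : f (-s) > 0 := by
    have h1 : m * mgf Y P s ≥ 2 + sY * β := by
      rw [ge_iff_le, ← div_le_iff₀' hm0]
      exact hsbig
    have h2 : -s * β > -sY * β := by
      have := mul_lt_mul_of_pos_right hssY hβ
      linarith
    simp only [hf, neg_neg]
    nlinarith
  have hivt1 : ∃ α₁ ∈ Set.Ioo (-s) (0 : ℝ), f α₁ = 0 := by
    have hcont : ContinuousOn f (Set.Icc (-s) 0) := by
      intro x hx
      exact (hfcont x (by have := hx.1; linarith)).continuousWithinAt
    have hle : -s ≤ (0 : ℝ) := by linarith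
    have := intermediate_value_Ioo' hle hcont (a := -s) (b := 0)
    have h0mem : (0 : ℝ) ∈ Set.Ioo (f 0) (f (-s)) := ⟨hf0, hBval⟩
    obtain ⟨x, hx, hfx⟩ := this h0mem
    exact ⟨x, hx, hfx⟩
  obtain ⟨α₁, hα₁mem, hα₁⟩ := hivt1
  obtain ⟨α₂, hα₂mem, hα₂⟩ := hivt2
  refine ⟨α₁, ⟨by linarith [hα₁mem.1], hα₁mem.2⟩, α₂, hα₂mem.1, ?_, hα₁, hα₂⟩
  exact ne_of_lt (lt_trans hα₁mem.2 hα₂mem.1)
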